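/- Let R > 1 be an integer, and consider a two-node network with constraints L₂ = U₂ = R, L₁ = 2, U₁ = R − 1. A strictly tight wake-up schedule (periods n₁ ∈ [2, R−1], n₂ = R, with infinitely many rendezvous and lcm(n₁,n₂) ≤ R) exists if and only if R is composite; moreover, in any such schedule n₁ is a proper divisor of R. -/
import Mathlib


theorem stmt_8 (R : ℕ) (hR : 1 < R) :
    ((∃ n₁ : ℕ, ∃ a₁ a₂ : ℤ,
        2 ≤ n₁ ∧ n₁ ≤ R - 1 ∧
        (Nat.gcd n₁ R : ℤ) ∣ a₁ - a₂ ∧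
        Nat.lcm n₁ R ≤ R) ↔ ¬ R.Prime) ∧
    (∀ n₁ : ℕ, ∀ a₁ a₂ : ℤ,
        2 ≤ n₁ → n₁ ≤ R - 1 →
        (Nat.gcd n₁ R : ℤ) ∣ a₁ - a₂ →
        Nat.lcm n₁ R ≤ R →
        n₁ ∣ R ∧ 1 < n₁ ∧ n₁ < R) := by
  have key : ∀ n₁ : ℕ, 2 ≤ n₁ → n₁ ≤ R - 1 → Nat.lcm n₁ R ≤ R →
      n₁ ∣ R ∧ 1 < n₁ ∧ n₁ < R := by
    intro n₁ h2 hle hlcm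
    have hn : n₁ ≠ 0 := by omega
    have hRne : R ≠ 0 := by omega
    have hdvd : R ∣ Nat.lcm n₁ R := Nat.dvd_lcm_right _ _
    have hlcmne : Nat.lcm n₁ R ≠ 0 := Nat.lcm_ne_zero hn hRne
    have hge : R ≤ Nat.lcm n₁ R := Nat.le_of_dvd (Nat.pos_of_ne_zero hlcmne) hdvd
    have heq : Nat.lcm n₁ R = R := le_antisymm hlcm hge
    have : n₁ ∣ R := heq ▸ Nat.dvd_lcm_left n₁ R
    exact ⟨this, by omega, by omega⟩
  constructor
  · constructor
    · rintro ⟨n₁, a₁, a₂, h2, hle, _, hlcm⟩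
      obtain ⟨hdvd, h1, hlt⟩ := key n₁ h2 hle hlcm
      intro hp
      rcases (Nat.Prime.eq_one_or_self_of_dvd hp n₁ hdvd) with h | h <;> omega
    · intro hnp
      obtain ⟨d, hd, h1, hlt⟩ := Nat.exists_dvd_of_not_prime2 hR hnp
      refine ⟨d, 0, 0, h1, by omega, by simp, ?_⟩
      have : Nat.lcm d R = R := Nat.dvd_antisymm (Nat.lcm_dvd hd dvd_rfl) (Nat.dvd_lcm_right d R)
      omega
  · intro n₁ a₁ a₂ h2 hle _ hlcm
    exact key n₁ h2 hle hlcm
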